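/- The set H = {(c, e, h) ∈ ℝ³ × ℝ³ × ℝ : c · e = 0 and 2h‖c‖² − κ⁴(‖e‖² − 1) = 0}, for a fixed constant κ > 0, is not homeomorphic to ℝ⁵. -/

import Mathlib

noncomputable abbrev E3 := EuclideanSpace ℝ (Fin 3)

/-- The space of all Keplerian orbits, as a subspace of ℝ⁷. -/
def Hall (κ : ℝ) : Set (E3 × E3 × ℝ) :=
  {x | inner ℝ x.1 x.2.1 = (0 : ℝ) ∧ 2 * x.2.2 * ‖x.1‖ ^ 2 - κ ^ 4 * (‖x.2.1‖ ^ 2 - 1) = 0}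

noncomputable abbrev E5 := EuclideanSpace ℝ (Fin 5)

lemma rank5 : (1 : Cardinal) < Module.rank ℝ E5 := by
  have : Module.rank ℝ E5 = (5 : ℕ) := by
    rw [← Module.finrank_eq_rank ℝ E5, finrank_euclideanSpace_fin]
  rw [this]
  norm_num

/-- The complement of a ball is connected in dimension 5. -/
lemma connected_far (R : ℝ) (hR : 0 ≤ R) : IsConnected {x : E5 | R < ‖x‖} := by
  have hs : IsConnected ((Metric.sphere (0 : E5) 1) ×ˢ Set.Ioi R) :=
    (isConnected_sphere rank5 0 zero_le_one).prod (isConnected_Ioi)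
  have hmap : Continuous fun p : E5 × ℝ => p.2 • p.1 :=
    continuous_snd.smul continuous_fst
  have himg : (fun p : E5 × ℝ => p.2 • p.1) '' ((Metric.sphere (0 : E5) 1) ×ˢ Set.Ioi R)
      = {x : E5 | R < ‖x‖} := by
    ext x
    constructor
    · rintro ⟨⟨v, t⟩, ⟨hv, ht⟩, rfl⟩
      have hv1 : ‖v‖ = 1 := by simpa using hv
      have ht' : R < t := ht
      have : ‖t • v‖ = |t| * ‖v‖ := norm_smul t v
      simp only [Set.mem_setOf_eq, this, hv1, mul_one]
      rw [abs_of_pos (lt_of_le_of_lt hR ht')]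
      exact ht'
    · intro hx
      have hx0 : x ≠ 0 := by
        intro h
        rw [h] at hx
        simp at hx
        exact absurd hx (not_lt.2 hR)
      refine ⟨(‖x‖⁻¹ • x, ‖x‖), ⟨?_, hx⟩, ?_⟩
      · simp [norm_smul, norm_ne_zero_iff.2 hx0, inv_mul_cancel₀ (norm_ne_zero_iff.2 hx0)]
      · simp [smul_smul, mul_inv_cancel₀ (norm_ne_zero_iff.2 hx0)]
  rw [← himg]
  exact hs.image _ hmap.continuousOn

theorem stmt7 (κ : ℝ) (hκ : 0 < κ) :
    ¬ Nonempty (Hall κ ≃ₜ EuclideanSpace ℝ (Fin 5)) := by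
  rintro ⟨φ⟩
  -- the slice h = -1 is compact
  set S : Set (Hall κ) := {p | (p : E3 × E3 × ℝ).2.2 = -1} with hS
  have hSval : Subtype.val '' S =
      {x : E3 × E3 × ℝ | x ∈ Hall κ ∧ x.2.2 = -1} := by
    ext x
    constructor
    · rintro ⟨⟨y, hy⟩, hys, rfl⟩; exact ⟨hy, hys⟩
    · rintro ⟨hx, hx2⟩; exact ⟨⟨x, hx⟩, hx2, rfl⟩
  have hclosed : IsClosed {x : E3 × E3 × ℝ | x ∈ Hall κ ∧ x.2.2 = -1} := by
    have h1 : IsClosed {x : E3 × E3 × ℝ | inner ℝ x.1 x.2.1 = (0 : ℝ)} :=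
      isClosed_eq (Continuous.inner continuous_fst (continuous_fst.comp continuous_snd))
        continuous_const
    have h2 : IsClosed {x : E3 × E3 × ℝ |
        2 * x.2.2 * ‖x.1‖ ^ 2 - κ ^ 4 * (‖x.2.1‖ ^ 2 - 1) = 0} :=
      isClosed_eq (by fun_prop) continuous_const
    have h3 : IsClosed {x : E3 × E3 × ℝ | x.2.2 = -1} :=
      isClosed_eq (by fun_prop) continuous_const
    have : {x : E3 × E3 × ℝ | x ∈ Hall κ ∧ x.2.2 = -1} =
        ({x : E3 × E3 × ℝ | inner ℝ x.1 x.2.1 = (0 : ℝ)} ∩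
         {x | 2 * x.2.2 * ‖x.1‖ ^ 2 - κ ^ 4 * (‖x.2.1‖ ^ 2 - 1) = 0}) ∩
         {x | x.2.2 = -1} := by
      ext x; exact ⟨fun ⟨⟨a, b⟩, c⟩ => ⟨⟨a, b⟩, c⟩, fun ⟨⟨a, b⟩, c⟩ => ⟨⟨a, b⟩, c⟩⟩
    rw [this]
    exact (h1.inter h2).inter h3
  have hbdd : Bornology.IsBounded {x : E3 × E3 × ℝ | x ∈ Hall κ ∧ x.2.2 = -1} := by
    rw [Metric.isBounded_iff_subset_closedBall 0]
    refine ⟨max (κ ^ 2) 1, fun x hx => ?_⟩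
    obtain ⟨⟨_, heq⟩, hh⟩ := hx
    rw [hh] at heq
    have hc2 : ‖x.1‖ ^ 2 ≤ κ ^ 4 := by nlinarith [mul_nonneg (pow_pos hκ 4).le (sq_nonneg ‖x.2.1‖)]
    have he2 : ‖x.2.1‖ ^ 2 ≤ 1 := by
      nlinarith [norm_nonneg x.1, sq_nonneg ‖x.1‖, pow_pos hκ 4]
    have hc : ‖x.1‖ ≤ κ ^ 2 := by nlinarith [norm_nonneg x.1, sq_nonneg κ]
    have he : ‖x.2.1‖ ≤ 1 := by nlinarith [norm_nonneg x.2.1]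
    rw [Metric.mem_closedBall, dist_zero_right, Prod.norm_def, Prod.norm_def]
    rw [hh]
    simp only [Real.norm_eq_abs]
    refine max_le (le_max_of_le_left hc) (max_le (le_max_of_le_right he) ?_)
    rw [abs_neg, abs_one]
    exact le_max_right _ _
  have hScompact : IsCompact S := by
    rw [Topology.IsEmbedding.subtypeVal.isCompact_iff, hSval]
    exact Metric.isCompact_of_isClosed_isBounded hclosed hbdd
  -- the image of the slice is contained in some closed ball
  obtain ⟨R, hR0, hRball⟩ : ∃ R, 0 ≤ R ∧ φ '' S ⊆ Metric.closedBall 0 R := by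
    obtain ⟨R, hR⟩ := (hScompact.image φ.continuous).isBounded.subset_closedBall 0
    exact ⟨max R 0, le_max_right _ _,
      hR.trans (Metric.closedBall_subset_closedBall (le_max_left _ _))⟩
  -- the unbounded family: c = 0, ‖e‖ = 1, h = t
  set e₀ : E3 := EuclideanSpace.single 0 1 with he₀
  have he₀n : ‖e₀‖ = 1 := by simp [he₀, EuclideanSpace.norm_single]
  have hmem : ∀ t : ℝ, ((0 : E3), e₀, t) ∈ Hall κ := by
    intro t
    constructor
    · simp
    · simp [he₀n]
  -- the preimage of the closed ball is compact hence bounded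
  have hpre : IsCompact (Subtype.val '' (φ.symm '' Metric.closedBall (0 : E5) R)) :=
    ((isCompact_closedBall 0 R).image φ.symm.continuous).image continuous_subtype_val
  obtain ⟨M, hM⟩ := isBounded_iff_forall_norm_le.1 hpre.isBounded
  have hM0 : 0 ≤ M := by
    have : φ.symm (φ ⟨_, hmem (-1)⟩) ∈ φ.symm '' Metric.closedBall (0 : E5) R := by
      refine ⟨_, ?_, rfl⟩
      apply hRball
      exact ⟨⟨_, hmem (-1)⟩, rfl, rfl⟩
    rw [Homeomorph.symm_apply_apply] at this
    have := hM _ ⟨_, this, rfl⟩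
    exact le_trans (norm_nonneg _) this
  -- two far points
  have hfar : ∀ t : ℝ, M < |t| → φ ⟨_, hmem t⟩ ∈ {x : E5 | R < ‖x‖} := by
    intro t ht
    by_contra hcon
    simp only [Set.mem_setOf_eq, not_lt] at hcon
    have h1 : φ ⟨_, hmem t⟩ ∈ Metric.closedBall (0 : E5) R := by
      rwa [Metric.mem_closedBall, dist_zero_right]
    have h2 : ((0 : E3), e₀, t) ∈ Subtype.val '' (φ.symm '' Metric.closedBall (0 : E5) R) := by
      refine ⟨⟨_, hmem t⟩, ⟨_, h1, ?_⟩, rfl⟩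
      exact Homeomorph.symm_apply_apply φ _
    have h3 := hM _ h2
    have h4 : |t| ≤ ‖((0 : E3), e₀, t)‖ := by
      calc |t| = ‖t‖ := (Real.norm_eq_abs t).symm
        _ ≤ ‖(e₀, t)‖ := norm_snd_le (e₀, t)
        _ ≤ ‖((0 : E3), e₀, t)‖ := norm_snd_le ((0 : E3), e₀, t)
    linarith
  set a : Hall κ := ⟨_, hmem (-(M + 2))⟩ with ha
  set b : Hall κ := ⟨_, hmem (M + 2)⟩ with hb
  have hfa : φ a ∈ {x : E5 | R < ‖x‖} := hfar _ (by rw [abs_neg, abs_of_pos] <;> linarith)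
  have hfb : φ b ∈ {x : E5 | R < ‖x‖} := hfar _ (by rw [abs_of_pos] <;> linarith)
  -- pull back the connected complement
  have hC := connected_far R hR0
  have hD : IsConnected (φ.symm '' {x : E5 | R < ‖x‖}) :=
    hC.image _ φ.symm.continuous.continuousOn
  have haD : a ∈ φ.symm '' {x : E5 | R < ‖x‖} :=
    ⟨φ a, hfa, Homeomorph.symm_apply_apply φ a⟩
  have hbD : b ∈ φ.symm '' {x : E5 | R < ‖x‖} :=
    ⟨φ b, hfb, Homeomorph.symm_apply_apply φ b⟩
  -- intermediate value theorem for the energy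
  have hcont : ContinuousOn (fun p : Hall κ => (p : E3 × E3 × ℝ).2.2)
      (φ.symm '' {x : E5 | R < ‖x‖}) := by fun_prop
  have hIcc : Set.Icc (-(M + 2)) (M + 2) ⊆
      (fun p : Hall κ => (p : E3 × E3 × ℝ).2.2) '' (φ.symm '' {x : E5 | R < ‖x‖}) :=
    hD.isPreconnected.intermediate_value haD hbD hcont
  have hm1 : (-1 : ℝ) ∈ Set.Icc (-(M + 2)) (M + 2) := by
    constructor <;> linarith
  obtain ⟨p, hp, hpval⟩ := hIcc hm1
  -- p is in the slice, contradiction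
  have hpS : p ∈ S := hpval
  obtain ⟨y, hy, hyp⟩ := hp
  have : φ p ∈ Metric.closedBall (0 : E5) R := hRball ⟨p, hpS, rfl⟩
  rw [← hyp, Homeomorph.apply_symm_apply] at this
  rw [Metric.mem_closedBall, dist_zero_right] at this
  exact absurd hy (not_lt.2 this)
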